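/- The relation ≤ on admissible weight diagrams, defined by λ ≤ μ if μ can be obtained from λ by a finite sequence of Bruhat moves (type A: ∨∧ → ∧∨ at neighboured positions; type D: initial neighboured ∧∧ → ∨∨), is a partial order; in particular it is antisymmetric. -/

import Mathlib

/-- The symbols `×, ∘, ∨, ∧, ◇` of a weight diagram. -/
inductive Symb : Type
  | x | o | dn | up | dia
  deriving DecidableEq

/-- A weight diagram: a labelling of the vertices of the nonnegative (half-)integer line
(enumerated by `ℕ`) by symbols. -/
abbrev WD := ℕ → Symb

/-- The diamond `◇` can only occur at the leftmost vertex. -/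
def DiaOnlyZero (w : WD) : Prop := ∀ n, w n = Symb.dia → n = 0

/-- Position `0` may only carry `∘` or `◇`. -/
def ZeroConstraint (w : WD) : Prop := w 0 = Symb.o ∨ w 0 = Symb.dia

/-- A weight diagram is admissible if it has only finitely many symbols `∘`, `×`, `∧`. -/
def Admissible (w : WD) : Prop :=
  {n : ℕ | w n = Symb.o ∨ w n = Symb.x ∨ w n = Symb.up}.Finite

/-- Two positions are neighboured if they are separated only by `∘`'s and `×`'s. -/
def Neigh (w : WD) (i j : ℕ) : Prop :=
  i < j ∧ ∀ k, i < k → k < j → w k = Symb.o ∨ w k = Symb.x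

/-- A type A Bruhat move: a neighboured pair `∨∧` is replaced by `∧∨`
(a `◇` may be read as `∨`, in which case the diamond is kept and the `∧` becomes `∨`). -/
def TypeAMove (w w' : WD) : Prop :=
  ∃ i j, Neigh w i j ∧ (∀ k, k ≠ i → k ≠ j → w' k = w k) ∧
    w j = Symb.up ∧ w' j = Symb.dn ∧
    ((w i = Symb.dn ∧ w' i = Symb.up) ∨ (w i = Symb.dia ∧ w' i = Symb.dia))

/-- A type D Bruhat move: an initial neighboured pair `∧∧` is replaced by `∨∨`. -/
def TypeDMove (w w' : WD) : Prop :=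
  ∃ i j, Neigh w i j ∧ (∀ k, k < i → w k = Symb.o ∨ w k = Symb.x) ∧
    (∀ k, k ≠ i → k ≠ j → w' k = w k) ∧
    w i = Symb.up ∧ w j = Symb.up ∧ w' i = Symb.dn ∧ w' j = Symb.dn

/-- A Bruhat move is a type A or a type D move. -/
def BruhatMove (w w' : WD) : Prop := TypeAMove w w' ∨ TypeDMove w w'

/-- The Bruhat order: `λ ≤ μ` iff `μ` is obtained from `λ` by a finite sequence of
Bruhat moves. -/
def BruhatLE : WD → WD → Prop := Relation.ReflTransGen BruhatMove

/-- The number of `∧`'s of a weight diagram. -/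
noncomputable def upCount (w : WD) : ℕ := Nat.card {n : ℕ | w n = Symb.up}

/-- The number of `∨`'s of `w` at positions `≤ i`. -/
def dnUpTo (w : WD) (i : ℕ) : ℕ :=
  ((Finset.range (i + 1)).filter fun j => w j = Symb.dn).card

/-- The statistics `l_i(λ,μ)`: `l_0(λ,μ) = 2k` where `λ` has `2k` more `∧`'s than `μ`;
for `i > 0`, `l_i(λ,μ) = 0` if `λ(i) ∈ {×,∘}`, and otherwise
`l_i(λ,μ) = 2k + #{j ≤ i : λ(j) = ∨} - #{j ≤ i : μ(j) = ∨}`. -/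
noncomputable def lstat (lam mu : WD) : ℕ → ℤ
  | 0 => (upCount lam : ℤ) - (upCount mu : ℤ)
  | i + 1 =>
    if lam (i + 1) = Symb.o ∨ lam (i + 1) = Symb.x then 0
    else (upCount lam : ℤ) - (upCount mu : ℤ)
      + (dnUpTo lam (i + 1) : ℤ) - (dnUpTo mu (i + 1) : ℤ)

/-- Two weight diagrams belong to the same block: the positions of `∘`'s and `×`'s
(and of the diamond) agree, and either the numbers of `∧`'s are congruent mod `2`
or both diagrams start with `◇`. -/
def SameBlock (lam mu : WD) : Prop :=
  (∀ n, lam n = Symb.o ↔ mu n = Symb.o) ∧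
  (∀ n, lam n = Symb.x ↔ mu n = Symb.x) ∧
  (lam 0 = Symb.dia ↔ mu 0 = Symb.dia) ∧
  (upCount lam % 2 = upCount mu % 2 ∨ (lam 0 = Symb.dia ∧ mu 0 = Symb.dia))


def upSet (w : WD) : Set ℕ := {n | w n = Symb.up}

noncomputable def upSum (w : WD) : ℕ := ∑ᶠ n ∈ upSet w, (n + 1)

lemma move_key {w w' : WD} (h : (upSet w).Finite) (hm : BruhatMove w w') :
    (upSet w').Finite ∧ upSum w' < upSum w := by
  rcases hm with ⟨i, j, ⟨hij, _⟩, hkeep, hj, hj', hi⟩ |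
    ⟨i, j, ⟨hij, _⟩, _, hkeep, hi, hj, hi', hj'⟩
  · rcases hi with ⟨hi, hi'⟩ | ⟨hi, hi'⟩
    · -- ∨∧ → ∧∨
      have hset : upSet w' = insert i (upSet w \ {j}) := by
        ext n
        rcases eq_or_ne n i with rfl | hni
        · simp [upSet, hi']
        rcases eq_or_ne n j with rfl | hnj
        · simp [upSet, hj', hni]
        · simp [upSet, hkeep n hni hnj, hni, hnj]
      have h' : (upSet w').Finite := hset ▸ ((h.diff (t := {j})).insert i)
      refine ⟨h', ?_⟩
      rw [upSum, upSum, finsum_mem_eq_finite_toFinset_sum _ h', finsum_mem_eq_finite_toFinset_sum _ h]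
      have hF : h'.toFinset = insert i (h.toFinset.erase j) := by
        ext n
        simp only [Set.Finite.mem_toFinset, hset, Set.mem_insert_iff, Set.mem_diff,
          Set.mem_singleton_iff, Finset.mem_insert, Finset.mem_erase]
        tauto
      have hjm : j ∈ h.toFinset := by simp [Set.Finite.mem_toFinset, upSet, hj]
      have him : i ∉ h.toFinset.erase j := by
        simp [Set.Finite.mem_toFinset, upSet, hi]
      rw [hF, Finset.sum_insert him, ← Finset.add_sum_erase _ _ hjm]
      omega
    · -- ◇∧ → ◇∨
      have hset : upSet w' = upSet w \ {j} := by
        ext n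
        rcases eq_or_ne n i with rfl | hni
        · simp [upSet, hi', hi, Nat.ne_of_lt hij]
        rcases eq_or_ne n j with rfl | hnj
        · simp [upSet, hj']
        · simp [upSet, hkeep n hni hnj, hnj]
      have h' : (upSet w').Finite := hset ▸ (h.diff (t := {j}))
      refine ⟨h', ?_⟩
      rw [upSum, upSum, finsum_mem_eq_finite_toFinset_sum _ h', finsum_mem_eq_finite_toFinset_sum _ h]
      have hF : h'.toFinset = h.toFinset.erase j := by
        ext n
        simp only [Set.Finite.mem_toFinset, hset, Set.mem_diff, Set.mem_singleton_iff,
          Finset.mem_erase]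
        tauto
      have hjm : j ∈ h.toFinset := by simp [Set.Finite.mem_toFinset, upSet, hj]
      rw [hF, ← Finset.add_sum_erase _ _ hjm]
      omega
  · -- ∧∧ → ∨∨
    have hset : upSet w' = upSet w \ {i, j} := by
      ext n
      rcases eq_or_ne n i with rfl | hni
      · simp [upSet, hi']
      rcases eq_or_ne n j with rfl | hnj
      · simp [upSet, hj']
      · simp [upSet, hkeep n hni hnj, hni, hnj]
    have h' : (upSet w').Finite := hset ▸ (h.diff (t := {i, j}))
    refine ⟨h', ?_⟩
    rw [upSum, upSum, finsum_mem_eq_finite_toFinset_sum _ h', finsum_mem_eq_finite_toFinset_sum _ h]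
    have hF : h'.toFinset = (h.toFinset.erase j).erase i := by
      ext n
      simp only [Set.Finite.mem_toFinset, hset, Set.mem_diff, Set.mem_insert_iff,
        Set.mem_singleton_iff, Finset.mem_erase]
      tauto
    have hjm : j ∈ h.toFinset := by simp [Set.Finite.mem_toFinset, upSet, hj]
    have him : i ∈ h.toFinset.erase j := by
      simp [Set.Finite.mem_toFinset, upSet, hi, Nat.ne_of_lt hij]
    rw [hF, ← Finset.add_sum_erase _ _ hjm, ← Finset.add_sum_erase _ _ him]
    omega

lemma chain_key {w w' : WD} (hle : BruhatLE w w') (h : (upSet w).Finite) :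
    (upSet w').Finite ∧ (upSum w' < upSum w ∨ w' = w) := by
  induction hle with
  | refl => exact ⟨h, Or.inr rfl⟩
  | tail hab hbc ih =>
    obtain ⟨hb, hs⟩ := ih
    obtain ⟨hc, hlt⟩ := move_key hb hbc
    refine ⟨hc, Or.inl ?_⟩
    rcases hs with hs | rfl
    · omega
    · exact hlt

/-- The Bruhat order on admissible weight diagrams is a partial order:
it is reflexive, transitive and, in particular, antisymmetric. -/
theorem bruhatLE_partialOrder :
    (∀ w : WD, BruhatLE w w) ∧
    (∀ a b c : WD, BruhatLE a b → BruhatLE b c → BruhatLE a c) ∧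
    (∀ lam mu : WD, DiaOnlyZero lam → DiaOnlyZero mu →
      ZeroConstraint lam → ZeroConstraint mu →
      Admissible lam → Admissible mu →
      BruhatLE lam mu → BruhatLE mu lam → lam = mu) := by
  refine ⟨fun w => Relation.ReflTransGen.refl,
    fun a b c hab hbc => Relation.ReflTransGen.trans hab hbc, ?_⟩
  intro lam mu _ _ _ _ hadl _ h1 h2
  have hl : (upSet lam).Finite :=
    hadl.subset (fun n hn => Or.inr (Or.inr hn))
  obtain ⟨hm, hs1⟩ := chain_key h1 hl
  obtain ⟨_, hs2⟩ := chain_key h2 hm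
  rcases hs1 with h | h
  · rcases hs2 with h' | h'
    · omega
    · exact h'
  · exact h.symm
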